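/- Let (G,c) be a W-state graph with vertex partition V = X ⊔ X' into the two factor-critical monochromatic components, and let {x,x'} with x ∈ X, x' ∈ X' be a 2-vertex cut. For each connected component C of G - {x,x'}, form H from G[V(C) ∪ {x,x'}] by adding bichromatic edges between x and x' so that both x and x' have incident red half-edges and at least one bichromatic edge joins x and x'. Then (H, c_H) is a W-state graph. -/

import Mathlib

/-! Multigraphs (parallel edges allowed, no loops) with half-edge 2-colourings,
    matchings, W-state graphs and W-cones, following the paper. -/

structure Multigraph (V E : Type) where
  fst : E → V
  snd : E → V
  no_loop : ∀ e, fst e ≠ snd e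

namespace Multigraph

variable {V E : Type} (G : Multigraph V E)

/-- Edge `e` is incident with vertex `v`. -/
def Inc (e : E) (v : V) : Prop := G.fst e = v ∨ G.snd e = v

/-- Adjacency using only edges in the edge set `F`. -/
def AdjIn (F : Set E) (u v : V) : Prop :=
  u ≠ v ∧ ∃ e ∈ F, G.Inc e u ∧ G.Inc e v

def Adj (u v : V) : Prop := G.AdjIn Set.univ u v

/-- Reachability inside the vertex set `S`, using only edges in `F`. -/
def ReachOn (F : Set E) (S : Set V) (u v : V) : Prop :=
  Relation.ReflTransGen (fun a b => a ∈ S ∧ b ∈ S ∧ G.AdjIn F a b) u v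

/-- The subgraph with edge set `F` induced on the vertex set `S` is connected. -/
def ConnectedOn (F : Set E) (S : Set V) : Prop :=
  ∀ u ∈ S, ∀ v ∈ S, G.ReachOn F S u v

def Connected : Prop := G.ConnectedOn Set.univ Set.univ

/-- `K` is a connected component of the subgraph with edge set `F` induced on `S`. -/
def IsCompOn (F : Set E) (S : Set V) (K : Set V) : Prop :=
  ∃ v ∈ S, K = {u | u ∈ S ∧ G.ReachOn F S u v}

def IsMatching (M : Set E) : Prop :=
  ∀ e ∈ M, ∀ f ∈ M, e ≠ f → ∀ v : V, ¬ (G.Inc e v ∧ G.Inc f v)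

/-- `M` is a perfect matching of the subgraph of `G` induced on `S`. -/
def IsPerfectMatchingOn (S : Set V) (M : Set E) : Prop :=
  (∀ e ∈ M, G.fst e ∈ S ∧ G.snd e ∈ S) ∧
  ∀ v ∈ S, ∃! e, e ∈ M ∧ G.Inc e v

def IsPerfectMatching (M : Set E) : Prop :=
  G.IsPerfectMatchingOn Set.univ M

/-- Every edge lies in some perfect matching. -/
def MatchingCovered : Prop :=
  ∀ e : E, ∃ M : Set E, G.IsPerfectMatching M ∧ e ∈ M

/-- The subgraph with edge set `F` induced on `K` is factor-critical. -/
def FactorCriticalOn (F : Set E) (K : Set V) : Prop :=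
  ∀ v ∈ K, ∃ M : Set E, M ⊆ F ∧ G.IsPerfectMatchingOn (K \ {v}) M

def FactorCritical : Prop := G.FactorCriticalOn Set.univ Set.univ

/-- `M` is a maximum matching among matchings using only edges in `F`. -/
def IsMaxMatchingIn (F M : Set E) : Prop :=
  M ⊆ F ∧ G.IsMatching M ∧
  ∀ N : Set E, N ⊆ F → G.IsMatching N → N.ncard ≤ M.ncard

/-- Half-edge 2-colourings are functions `c : E → V → Bool`
    (`true` = red, `false` = blue; only the values at endpoints matter). -/
def Bichromatic (c : E → V → Bool) (e : E) : Prop :=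
  c e (G.fst e) ≠ c e (G.snd e)

/-- The monochromatic edges. -/
def MonoEdges (c : E → V → Bool) : Set E := {e | ¬ G.Bichromatic c e}

/-- Every vertex has an incident red half-edge. -/
def VertexCond (c : E → V → Bool) : Prop :=
  ∀ v : V, ∃ e : E, G.Inc e v ∧ c e v = true

/-- Every perfect matching contains exactly one bichromatic edge. -/
def MatchingCond (c : E → V → Bool) : Prop :=
  ∀ M : Set E, G.IsPerfectMatching M → ∃! e, e ∈ M ∧ G.Bichromatic c e

/-- All monochromatic edges are blue. -/
def NoRedMono (c : E → V → Bool) : Prop :=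
  ∀ e : E, ¬ G.Bichromatic c e → c e (G.fst e) = false

/-- W-state graph. -/
def IsWState (c : E → V → Bool) : Prop :=
  G.MatchingCovered ∧ G.MatchingCond c ∧ G.VertexCond c ∧ G.NoRedMono c

def Universal (v : V) : Prop := ∀ u : V, u ≠ v → G.Adj u v

/-- W-cone with apex `v`. -/
def IsWConeWithApex (c : E → V → Bool) (v : V) : Prop :=
  G.MatchingCovered ∧ G.Universal v ∧
  (∀ e : E, G.Bichromatic c e ↔ G.Inc e v) ∧
  G.VertexCond c ∧ G.NoRedMono c

def IsWCone (c : E → V → Bool) : Prop := ∃ v : V, G.IsWConeWithApex c v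

/-- `e` and `f` are parallel edges (same pair of endpoints). -/
def Parallel (e f : E) : Prop :=
  (G.fst e = G.fst f ∧ G.snd e = G.snd f) ∨
  (G.fst e = G.snd f ∧ G.snd e = G.fst f)

/-- The cut `δ(X)`. -/
def CutEdges (X : Set V) : Set E :=
  {e | (G.fst e ∈ X ∧ G.snd e ∉ X) ∨ (G.fst e ∉ X ∧ G.snd e ∈ X)}

/-- `δ(X)` is a tight cut. -/
def IsTightCut (X : Set V) : Prop :=
  ∀ M : Set E, G.IsPerfectMatching M → ∃! e, e ∈ M ∧ e ∈ G.CutEdges X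

def Bipartite : Prop :=
  ∃ f : V → Bool, ∀ e : E, f (G.fst e) ≠ f (G.snd e)

/-- A brick: non-bipartite matching-covered graph with no non-trivial tight cut. -/
def IsBrick : Prop :=
  G.MatchingCovered ∧ ¬ G.Bipartite ∧
  ∀ X : Set V, 2 ≤ X.ncard → 2 ≤ (Set.univ \ X).ncard → ¬ G.IsTightCut X

end Multigraph

namespace Stmt18aux

open Multigraph Set

variable {V E : Type} (G : Multigraph V E)

/-- The set of vertices covered by an edge set. -/
def covered (N : Set E) : Set V := {v | ∃ e ∈ N, G.Inc e v}

variable {G}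

lemma inc_fst (e : E) : G.Inc e (G.fst e) := Or.inl rfl
lemma inc_snd (e : E) : G.Inc e (G.snd e) := Or.inr rfl

lemma mem_covered {N : Set E} {e : E} {v : V} (he : e ∈ N) (hv : G.Inc e v) :
    v ∈ covered G N := ⟨e, he, hv⟩

lemma matching_mono {N M : Set E} (h : N ⊆ M) (hM : G.IsMatching M) :
    G.IsMatching N := fun e he f hf hef v hv => hM e (h he) f (h hf) hef v hv

lemma matching_unique_at {M : Set E} (hM : G.IsMatching M) {e f : E} {v : V}
    (he : e ∈ M) (hf : f ∈ M) (hev : G.Inc e v) (hfv : G.Inc f v) : e = f := by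
  by_contra hne
  exact hM e he f hf hne v ⟨hev, hfv⟩

lemma covered_union (N₁ N₂ : Set E) :
    covered G (N₁ ∪ N₂) = covered G N₁ ∪ covered G N₂ := by
  ext v
  constructor
  · rintro ⟨e, he | he, hv⟩
    · exact Or.inl ⟨e, he, hv⟩
    · exact Or.inr ⟨e, he, hv⟩
  · rintro (⟨e, he, hv⟩ | ⟨e, he, hv⟩)
    · exact ⟨e, Or.inl he, hv⟩
    · exact ⟨e, Or.inr he, hv⟩

lemma matching_union {N₁ N₂ : Set E} (h₁ : G.IsMatching N₁) (h₂ : G.IsMatching N₂)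
    (hd : Disjoint (covered G N₁) (covered G N₂)) : G.IsMatching (N₁ ∪ N₂) := by
  rintro e (he | he) f (hf | hf) hef v ⟨hev, hfv⟩
  · exact h₁ e he f hf hef v ⟨hev, hfv⟩
  · exact hd.ne_of_mem (mem_covered he hev) (mem_covered hf hfv) rfl
  · exact hd.ne_of_mem (mem_covered hf hfv) (mem_covered he hev) rfl
  · exact h₂ e he f hf hef v ⟨hev, hfv⟩

lemma covered_singleton (e : E) : covered G {e} = {G.fst e, G.snd e} := by
  ext v
  constructor
  · rintro ⟨f, rfl, hv | hv⟩
    · exact Or.inl hv.symm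
    · exact Or.inr hv.symm
  · rintro (rfl | rfl)
    · exact ⟨e, rfl, inc_fst e⟩
    · exact ⟨e, rfl, inc_snd e⟩

lemma matching_singleton (e : E) : G.IsMatching {e} := by
  rintro a rfl b rfl hab; exact absurd rfl hab

lemma pm_iff {M : Set E} :
    G.IsPerfectMatching M ↔ G.IsMatching M ∧ covered G M = Set.univ := by
  constructor
  · rintro ⟨-, h⟩
    constructor
    · intro e he f hf hef v ⟨hev, hfv⟩
      obtain ⟨g, -, hg⟩ := h v trivial
      exact hef ((hg e ⟨he, hev⟩).trans (hg f ⟨hf, hfv⟩).symm)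
    · ext v
      simp only [Set.mem_univ, iff_true]
      obtain ⟨g, ⟨hgM, hgv⟩, -⟩ := h v trivial
      exact ⟨g, hgM, hgv⟩
  · rintro ⟨hm, hcov⟩
    refine ⟨fun e _ => ⟨trivial, trivial⟩, fun v _ => ?_⟩
    have : v ∈ covered G M := hcov ▸ trivial
    obtain ⟨e, he, hev⟩ := this
    exact ⟨e, ⟨he, hev⟩, fun f ⟨hf, hfv⟩ => matching_unique_at hm hf he hfv hev⟩

lemma covered_insert (e : E) (N : Set E) :
    covered G (insert e N) = {G.fst e, G.snd e} ∪ covered G N := by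
  rw [Set.insert_eq, covered_union, covered_singleton]

lemma even_ncard_covered [Fintype V] [Fintype E] {N : Set E} (hN : G.IsMatching N) :
    Even (covered G N).ncard := by
  refine Set.Finite.induction_on
    (motive := fun s _ => G.IsMatching s → Even (covered G s).ncard) N (Set.toFinite N) ?_ ?_ hN
  · intro _
    have : covered G (∅ : Set E) = ∅ := by
      ext v; exact ⟨fun ⟨e, he, _⟩ => he.elim, fun h => h.elim⟩
    simp [this]
  · intro a s ha _ ih hN'
    have hms : G.IsMatching s := matching_mono (Set.subset_insert a s) hN'
    have hd : Disjoint ({G.fst a, G.snd a} : Set V) (covered G s) := by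
      rw [Set.disjoint_left]
      rintro v hv ⟨f, hf, hfv⟩
      have hav : G.Inc a v := by
        rcases hv with rfl | rfl
        · exact inc_fst a
        · exact inc_snd a
      have : a ≠ f := fun h => ha (h ▸ hf)
      exact hN' a (Set.mem_insert a s) f (Set.mem_insert_of_mem a hf) this v ⟨hav, hfv⟩
    rw [covered_insert, Set.ncard_union_eq hd, Set.ncard_pair (G.no_loop a)]
    obtain ⟨k, hk⟩ := ih hms
    exact ⟨1 + k, by omega⟩

end Stmt18aux
namespace Stmt18aux

open Multigraph Set

variable {V E : Type} {G : Multigraph V E} {c : E → V → Bool}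

lemma covered_diff_singleton {N : Set E} (hN : G.IsMatching N) {e : E} (he : e ∈ N) :
    covered G (N \ {e}) = covered G N \ {G.fst e, G.snd e} := by
  ext v
  constructor
  · rintro ⟨f, ⟨hfN, hfe⟩, hfv⟩
    refine ⟨⟨f, hfN, hfv⟩, fun hv => ?_⟩
    have hev : G.Inc e v := by rcases hv with rfl | rfl; exacts [inc_fst e, inc_snd e]
    exact hfe (matching_unique_at hN hfN he hfv hev)
  · rintro ⟨⟨f, hfN, hfv⟩, hv⟩
    refine ⟨f, ⟨hfN, fun hfe => ?_⟩, hfv⟩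
    rw [Set.mem_singleton_iff] at hfe
    subst hfe
    rcases hfv with h | h
    · exact hv (Or.inl h.symm)
    · exact hv (Or.inr h.symm)

/-- Monochromatic edges do not cross the side `A`. -/
def SideOk (G : Multigraph V E) (c : E → V → Bool) (A : Set V) : Prop :=
  ∀ e, ¬ G.Bichromatic c e → (G.fst e ∈ A ↔ G.snd e ∈ A)

/-- All edges of `N` are monochromatic. -/
def Mono (G : Multigraph V E) (c : E → V → Bool) (N : Set E) : Prop :=
  ∀ f ∈ N, ¬ G.Bichromatic c f

lemma sideok_compl {A : Set V} (h : SideOk G c A) : SideOk G c Aᶜ := by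
  intro e he
  simpa using not_congr (h e he)

/-- The edges of `M` internal to `A`. -/
def intE (G : Multigraph V E) (A : Set V) : Set E := {e | G.fst e ∈ A ∧ G.snd e ∈ A}

lemma covered_int_subset {M : Set E} {A : Set V} : covered G (M ∩ intE G A) ⊆ A := by
  rintro v ⟨f, ⟨-, hf1, hf2⟩, hv | hv⟩
  · exact hv ▸ hf1
  · exact hv ▸ hf2

lemma mem_int_of_inc {A : Set V} (hside : SideOk G c A) {f : E} (hmono : ¬ G.Bichromatic c f)
    {v : V} (hv : v ∈ A) (hfv : G.Inc f v) : f ∈ intE G A := by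
  rcases hfv with h | h
  · exact ⟨h.symm ▸ hv, (hside f hmono).1 (h.symm ▸ hv)⟩
  · exact ⟨(hside f hmono).2 (h.symm ▸ hv), h.symm ▸ hv⟩

lemma Rmono {M : Set E} {A : Set V}
    (hb : ∀ f ∈ M, G.Bichromatic c f → f ∉ intE G A) :
    Mono G c (M ∩ intE G A) := by
  rintro f ⟨hfM, hfA⟩ hbf
  exact hb f hfM hbf hfA

/-- If the unique bichromatic edge of `M` has exactly one end `u ∈ A`,
the `A`-internal part of `M` covers `A \ {u}`. -/
lemma R2 {M : Set E} (hMm : G.IsMatching M) (hMc : covered G M = Set.univ)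
    {A : Set V} (hside : SideOk G c A) {b : E} (hbM : b ∈ M)
    (hbuniq : ∀ f ∈ M, G.Bichromatic c f → f = b)
    {u : V} (hu : u ∈ A) (hub : G.Inc b u)
    (hother : ∀ w, G.Inc b w → w ≠ u → w ∉ A) :
    covered G (M ∩ intE G A) = A \ {u} := by
  have hbnotint : b ∉ intE G A := by
    rintro ⟨h1, h2⟩
    rcases hub with h | h
    · exact hother (G.snd b) (inc_snd b) (fun hh => G.no_loop b (h.trans hh.symm)) h2
    · exact hother (G.fst b) (inc_fst b) (fun hh => G.no_loop b (hh.trans h.symm)) h1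
  apply Set.Subset.antisymm
  · intro v hv
    refine ⟨covered_int_subset hv, fun hvu => ?_⟩
    rw [Set.mem_singleton_iff] at hvu
    subst hvu
    obtain ⟨f, ⟨hfM, hfint⟩, hfv⟩ := hv
    have : f = b := matching_unique_at hMm hfM hbM hfv hub
    exact hbnotint (this ▸ hfint)
  · rintro v ⟨hvA, hvu⟩
    rw [Set.mem_singleton_iff] at hvu
    have : v ∈ covered G M := hMc ▸ trivial
    obtain ⟨f, hfM, hfv⟩ := this
    have hfb : f ≠ b := by
      rintro rfl
      exact hother v hfv hvu hvA
    have hmono : ¬ G.Bichromatic c f := fun hb => hfb (hbuniq f hfM hb)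
    exact ⟨f, ⟨hfM, mem_int_of_inc hside hmono hvA hfv⟩, hfv⟩

lemma parity_contra [Fintype V] {A : Set V} {o : V} (ho : o ∈ A)
    (h1 : Even A.ncard) (h2 : Even (A \ {o}).ncard) : False := by
  rw [Set.ncard_diff_singleton_of_mem ho] at h2
  have hpos : 0 < A.ncard := (Set.ncard_pos (Set.toFinite A)).mpr ⟨o, ho⟩
  obtain ⟨k, hk⟩ := h1
  obtain ⟨m, hm⟩ := h2
  omega

end Stmt18aux
namespace Stmt18aux

open Multigraph Set

variable {V E : Type} {G : Multigraph V E} {c : E → V → Bool}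

set_option linter.unusedSectionVars false

lemma other_end {e : E} {v : V} (h : G.Inc e v) :
    ∃ o, G.Inc e o ∧ o ≠ v ∧ (∀ w, G.Inc e w → w = v ∨ w = o) ∧
      (∀ A : Set V, e ∈ intE G A ↔ v ∈ A ∧ o ∈ A) := by
  rcases h with h | h
  · subst h
    refine ⟨G.snd e, inc_snd e, fun hh => G.no_loop e hh.symm, ?_, fun A => Iff.rfl⟩
    rintro w (rfl | rfl)
    · exact Or.inl rfl
    · exact Or.inr rfl
  · subst h
    refine ⟨G.fst e, inc_fst e, G.no_loop e, ?_, fun A => ?_⟩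
    · rintro w (rfl | rfl)
      · exact Or.inr rfl
      · exact Or.inl rfl
    · exact ⟨fun ⟨h1, h2⟩ => ⟨h2, h1⟩, fun ⟨h1, h2⟩ => ⟨h2, h1⟩⟩

lemma touch_of_int {e : E} {A : Set V} (h : e ∈ intE G A) :
    ∀ v, G.Inc e v → v ∈ A := by
  rintro v (rfl | rfl)
  · exact h.1
  · exact h.2

/-- Covering a side `B`: every vertex of `B` whose matching edge is bichromatic
must have that edge internal to `B` (or the edge avoids `B`). -/
lemma R0 {M : Set E} (hMc : covered G M = Set.univ) {B : Set V} (hside : SideOk G c B)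
    (hb : ∀ f ∈ M, G.Bichromatic c f → f ∈ intE G B ∨ ∀ v, G.Inc f v → v ∉ B) :
    covered G (M ∩ intE G B) = B := by
  apply Set.Subset.antisymm covered_int_subset
  intro v hv
  have : v ∈ covered G M := hMc ▸ trivial
  obtain ⟨f, hfM, hfv⟩ := this
  by_cases hbf : G.Bichromatic c f
  · rcases hb f hfM hbf with h | h
    · exact ⟨f, ⟨hfM, h⟩, hfv⟩
    · exact absurd hv (h v hfv)
  · exact ⟨f, ⟨hfM, mem_int_of_inc hside hbf hv hfv⟩, hfv⟩

variable [Fintype V] [Fintype E]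

/-- Extract the unique bichromatic edge info from a perfect matching containing
a given bichromatic edge. -/
lemma unique_bi {M : Set E} (hPM : G.IsPerfectMatching M) (hmcond : G.MatchingCond c)
    {e : E} (heM : e ∈ M) (hbe : G.Bichromatic c e) :
    ∀ f ∈ M, G.Bichromatic c f → f = e := by
  obtain ⟨b, -, hbu⟩ := hmcond M hPM
  intro f hf hbf
  exact (hbu f ⟨hf, hbf⟩).trans (hbu e ⟨heM, hbe⟩).symm

lemma no_bi_internal (hmc : G.MatchingCovered) (hmcond : G.MatchingCond c)
    {A : Set V} (hside : SideOk G c A)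
    (hbic : ∀ v, ∃ e, G.Inc e v ∧ G.Bichromatic c e)
    (hA' : Aᶜ.Nonempty) :
    ∀ e, G.Bichromatic c e → e ∉ intE G A := by
  intro e₀ hbe₀ he₀int
  obtain ⟨M, hPM, he₀M⟩ := hmc e₀
  obtain ⟨hMm, hMc⟩ := pm_iff.1 hPM
  have huniq := unique_bi hPM hmcond he₀M hbe₀
  -- the Aᶜ-internal part of M covers Aᶜ, monochromatically
  have hR0' : covered G (M ∩ intE G Aᶜ) = Aᶜ := by
    refine R0 hMc (sideok_compl hside) (fun f hf hbf => Or.inr fun v hfv hvA => ?_)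
    rw [huniq f hf hbf] at hfv
    exact hvA (touch_of_int he₀int v hfv)
  have hmono' : Mono G c (M ∩ intE G Aᶜ) := by
    rintro f ⟨hfM, hfint⟩ hbf
    rw [huniq f hfM hbf] at hfint
    exact hfint.1 he₀int.1
  -- a bichromatic edge at a vertex of Aᶜ
  obtain ⟨v', hv'⟩ := hA'
  obtain ⟨e', he'v, hbe'⟩ := hbic v'
  obtain ⟨M', hPM', he'M⟩ := hmc e'
  obtain ⟨hMm', hMc'⟩ := pm_iff.1 hPM'
  have huniq' := unique_bi hPM' hmcond he'M hbe'
  obtain ⟨o, ho, hno, hends, hint⟩ := other_end he'v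
  by_cases hoA : o ∈ A
  · -- e' crossing: parity contradiction
    have hcovA : covered G (M ∩ intE G A) = A := by
      refine R0 hMc hside (fun f hf hbf => Or.inl ?_)
      rw [huniq f hf hbf]; exact he₀int
    have hcovA' : covered G (M' ∩ intE G A) = A \ {o} := by
      refine R2 hMm' hMc' hside he'M huniq' hoA ho (fun w hw hwo => ?_)
      rcases hends w hw with rfl | rfl
      · exact hv'
      · exact absurd rfl hwo
    have h1 : Even A.ncard := by
      rw [← hcovA]
      exact even_ncard_covered (matching_mono Set.inter_subset_left hMm)
    have h2 : Even (A \ {o}).ncard := by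
      rw [← hcovA']
      exact even_ncard_covered (matching_mono Set.inter_subset_left hMm')
    exact parity_contra hoA h1 h2
  · -- e' internal to Aᶜ: build a perfect matching with no bichromatic edge
    have he'int : e' ∈ intE G Aᶜ := (hint Aᶜ).2 ⟨hv', hoA⟩
    have hcovA : covered G (M' ∩ intE G A) = A := by
      refine R0 hMc' hside (fun f hf hbf => Or.inr fun v hfv hvA => ?_)
      rw [huniq' f hf hbf] at hfv
      exact touch_of_int he'int v hfv hvA
    have hmonoA : Mono G c (M' ∩ intE G A) := by
      rintro f ⟨hfM, hfint⟩ hbf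
      rw [huniq' f hfM hbf] at hfint
      exact he'int.1 hfint.1
    set N := (M' ∩ intE G A) ∪ (M ∩ intE G Aᶜ) with hN
    have hdisj : Disjoint (covered G (M' ∩ intE G A)) (covered G (M ∩ intE G Aᶜ)) := by
      rw [hcovA, hR0']
      exact disjoint_compl_right
    have hNm : G.IsMatching N :=
      matching_union (matching_mono Set.inter_subset_left hMm')
        (matching_mono Set.inter_subset_left hMm) hdisj
    have hNc : covered G N = Set.univ := by
      rw [hN, covered_union, hcovA, hR0', Set.union_compl_self]
    obtain ⟨b, ⟨hbN, hbb⟩, -⟩ := hmcond N (pm_iff.2 ⟨hNm, hNc⟩)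
    rcases hbN with hb | hb
    · exact hmonoA b hb hbb
    · exact hmono' b hb hbb

/-- Factor-criticality of the side `A` via monochromatic edges. -/
lemma fc_side (hmc : G.MatchingCovered) (hmcond : G.MatchingCond c)
    {A : Set V} (hside : SideOk G c A)
    (hbic : ∀ v, ∃ e, G.Inc e v ∧ G.Bichromatic c e)
    (hA' : Aᶜ.Nonempty) :
    ∀ v ∈ A, ∃ N : Set E, G.IsMatching N ∧ Mono G c N ∧ covered G N = A \ {v} := by
  intro v hv
  obtain ⟨e', he'v, hbe'⟩ := hbic v
  obtain ⟨M, hPM, he'M⟩ := hmc e'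
  obtain ⟨hMm, hMc⟩ := pm_iff.1 hPM
  have huniq := unique_bi hPM hmcond he'M hbe'
  obtain ⟨o, ho, hno, hends, hint⟩ := other_end he'v
  have hoA : o ∉ A := by
    intro hoA
    exact no_bi_internal hmc hmcond hside hbic hA' e' hbe' ((hint A).2 ⟨hv, hoA⟩)
  refine ⟨M ∩ intE G A, matching_mono Set.inter_subset_left hMm, ?_, ?_⟩
  · rintro f ⟨hfM, hfint⟩ hbf
    rw [huniq f hfM hbf] at hfint
    exact hoA ((hint A).1 hfint).2
  · refine R2 hMm hMc hside he'M huniq hv he'v (fun w hw hwv => ?_)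
    rcases hends w hw with rfl | rfl
    · exact absurd rfl hwv
    · exact hoA

end Stmt18aux
namespace Stmt18aux

open Multigraph Set

variable {V E : Type} {G : Multigraph V E} {c : E → V → Bool}

set_option linter.unusedSectionVars false

lemma mono_sub {N M : Set E} (h : N ⊆ M) (hM : Mono G c M) : Mono G c N :=
  fun f hf => hM f (h hf)

lemma other_end' {e : E} {v : V} (h : G.Inc e v) :
    ∃ o, G.Inc e o ∧ o ≠ v ∧ (∀ w, G.Inc e w → w = v ∨ w = o) ∧
      ({G.fst e, G.snd e} : Set V) = {v, o} := by
  rcases h with h | h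
  · subst h
    refine ⟨G.snd e, inc_snd e, fun hh => G.no_loop e hh.symm, ?_, rfl⟩
    rintro w (rfl | rfl)
    · exact Or.inl rfl
    · exact Or.inr rfl
  · subst h
    refine ⟨G.fst e, inc_fst e, G.no_loop e, ?_, Set.pair_comm _ _⟩
    rintro w (rfl | rfl)
    · exact Or.inr rfl
    · exact Or.inl rfl

variable [Fintype V] [Fintype E]

section Split

variable {A : Set V} {xA xB : V} {C Dd : Set V}

/-- The `C`-part of a mono near-perfect matching of the side `A` missing `xA`. -/
lemma split_muC
    (hfc : ∀ v ∈ A, ∃ N : Set E, G.IsMatching N ∧ Mono G c N ∧ covered G N = A \ {v})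
    (hxA : xA ∈ A) (hxBA : xB ∉ A) (hCxA : xA ∉ C)
    (hCD : Disjoint C Dd)
    (hpart : ∀ v, v ≠ xA → v ≠ xB → v ∈ C ∨ v ∈ Dd)
    (hClo : ∀ e v w, v ∈ C → G.Inc e v → G.Inc e w → w ∈ C ∨ w = xA ∨ w = xB)
    (hDlo : ∀ e v w, v ∈ Dd → G.Inc e v → G.Inc e w → w ∈ Dd ∨ w = xA ∨ w = xB) :
    ∃ N : Set E, G.IsMatching N ∧ Mono G c N ∧ (∀ f ∈ N, f ∈ intE G C) ∧
      covered G N = A ∩ C := by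
  obtain ⟨K, hKm, hKmono, hKcov⟩ := hfc xA hxA
  have hKends : ∀ f ∈ K, ∀ w, G.Inc f w → w ∈ A ∧ w ≠ xA ∧ w ≠ xB := by
    intro f hf w hw
    have : w ∈ A \ {xA} := hKcov ▸ mem_covered hf hw
    exact ⟨this.1, this.2, fun hh => hxBA (hh ▸ this.1)⟩
  have hstep : ∀ f ∈ K, f ∈ intE G C ∨ ∀ w, G.Inc f w → w ∈ Dd := by
    intro f hf
    obtain ⟨hA1, hne1, hne2⟩ := hKends f hf (G.fst f) (inc_fst f)
    rcases hpart (G.fst f) hne1 hne2 with hC | hD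
    · left
      refine ⟨hC, ?_⟩
      obtain ⟨hA2, hne1', hne2'⟩ := hKends f hf (G.snd f) (inc_snd f)
      rcases hClo f (G.fst f) (G.snd f) hC (inc_fst f) (inc_snd f) with h | h | h
      · exact h
      · exact absurd h hne1'
      · exact absurd h hne2'
    · right
      intro w hw
      obtain ⟨-, hne1', hne2'⟩ := hKends f hf w hw
      rcases hDlo f (G.fst f) w hD (inc_fst f) hw with h | h | h
      · exact h
      · exact absurd h hne1'
      · exact absurd h hne2'
  refine ⟨K ∩ intE G C, matching_mono Set.inter_subset_left hKm,
    mono_sub Set.inter_subset_left hKmono, fun f hf => hf.2, ?_⟩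
  apply Set.Subset.antisymm
  · rintro u ⟨f, ⟨hfK, hfint⟩, hfu⟩
    exact ⟨(hKends f hfK u hfu).1, touch_of_int hfint u hfu⟩
  · rintro u ⟨huA, huC⟩
    have : u ∈ covered G K := by
      rw [hKcov]
      exact ⟨huA, fun hh => hCxA (hh ▸ huC)⟩
    obtain ⟨f, hfK, hfu⟩ := this
    rcases hstep f hfK with hint | hD
    · exact ⟨f, ⟨hfK, hint⟩, hfu⟩
    · exact absurd (hD u hfu) (fun h => hCD.ne_of_mem huC h rfl)

/-- Near-perfect mono matchings of `(A ∩ C) ∪ {xA}`. -/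
lemma split_PC
    (hfc : ∀ v ∈ A, ∃ N : Set E, G.IsMatching N ∧ Mono G c N ∧ covered G N = A \ {v})
    (hxA : xA ∈ A) (hxBA : xB ∉ A) (hCxA : xA ∉ C) (hDxA : xA ∉ Dd)
    (hCD : Disjoint C Dd)
    (hpart : ∀ v, v ≠ xA → v ≠ xB → v ∈ C ∨ v ∈ Dd)
    (hClo : ∀ e v w, v ∈ C → G.Inc e v → G.Inc e w → w ∈ C ∨ w = xA ∨ w = xB)
    (hDlo : ∀ e v w, v ∈ Dd → G.Inc e v → G.Inc e w → w ∈ Dd ∨ w = xA ∨ w = xB) :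
    ∀ v ∈ A, v ∈ C → ∃ N : Set E, G.IsMatching N ∧ Mono G c N ∧
      (∀ f ∈ N, f ∈ intE G (C ∪ {xA})) ∧
      covered G N = ((A ∩ C) \ {v}) ∪ {xA} := by
  intro v hvA hvC
  have hEvenAC : Even (A ∩ C).ncard := by
    obtain ⟨N, hm, -, -, hcov⟩ := split_muC hfc hxA hxBA hCxA hCD hpart hClo hDlo
    rw [← hcov]
    exact even_ncard_covered hm
  obtain ⟨K, hKm, hKmono, hKcov⟩ := hfc v hvA
  have hvxA : v ≠ xA := fun h => hCxA (h ▸ hvC)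
  have hxAcov : xA ∈ covered G K := by
    rw [hKcov]; exact ⟨hxA, fun h => hvxA (Set.mem_singleton_iff.1 h).symm⟩
  obtain ⟨g, hgK, hgxA⟩ := hxAcov
  obtain ⟨o, hgo, honxA, hgends, hgset⟩ := other_end' hgxA
  have hoKcov : o ∈ A \ {v} := hKcov ▸ mem_covered hgK hgo
  have hoA : o ∈ A := hoKcov.1
  have honv : o ≠ v := hoKcov.2
  have honxB : o ≠ xB := fun h => hxBA (h ▸ hoA)
  have hoCD : o ∈ C ∨ o ∈ Dd := hpart o honxA honxB
  set K' := K \ {g} with hK'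
  have hK'cov : covered G K' = (A \ {v}) \ {xA, o} := by
    rw [hK', covered_diff_singleton hKm hgK, hKcov, hgset]
  have hK'ends : ∀ f ∈ K', ∀ w, G.Inc f w →
      w ∈ A ∧ w ≠ v ∧ w ≠ xA ∧ w ≠ o ∧ w ≠ xB := by
    intro f hf w hw
    have : w ∈ (A \ {v}) \ {xA, o} := hK'cov ▸ mem_covered hf hw
    obtain ⟨⟨h1, h2⟩, h3⟩ := this
    simp only [Set.mem_insert_iff, Set.mem_singleton_iff, not_or] at h3
    exact ⟨h1, h2, h3.1, h3.2, fun hh => hxBA (hh ▸ h1)⟩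
  have hstep : ∀ f ∈ K', (f ∈ intE G C ∧ ∀ w, G.Inc f w → w ∈ C) ∨
      (∀ w, G.Inc f w → w ∈ Dd) := by
    intro f hf
    obtain ⟨hA1, -, hne1, -, hne2⟩ := hK'ends f hf (G.fst f) (inc_fst f)
    rcases hpart (G.fst f) hne1 hne2 with hC | hD
    · left
      have hsnd : G.snd f ∈ C := by
        obtain ⟨-, -, hne1', -, hne2'⟩ := hK'ends f hf (G.snd f) (inc_snd f)
        rcases hClo f (G.fst f) (G.snd f) hC (inc_fst f) (inc_snd f) with h | h | h
        · exact h
        · exact absurd h hne1'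
        · exact absurd h hne2'
      exact ⟨⟨hC, hsnd⟩, touch_of_int ⟨hC, hsnd⟩⟩
    · right
      intro w hw
      obtain ⟨-, -, hne1', -, hne2'⟩ := hK'ends f hf w hw
      rcases hDlo f (G.fst f) w hD (inc_fst f) hw with h | h | h
      · exact h
      · exact absurd h hne1'
      · exact absurd h hne2'
  have hK'Ccov : covered G (K' ∩ intE G C) = ((A ∩ C) \ {v}) \ {o} := by
    apply Set.Subset.antisymm
    · rintro u ⟨f, ⟨hfK, hfint⟩, hfu⟩
      obtain ⟨h1, h2, -, h4, -⟩ := hK'ends f hfK u hfu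
      exact ⟨⟨⟨h1, touch_of_int hfint u hfu⟩, h2⟩, h4⟩
    · rintro u ⟨⟨⟨huA, huC⟩, huv⟩, huo⟩
      have : u ∈ covered G K' := by
        rw [hK'cov]
        refine ⟨⟨huA, huv⟩, ?_⟩
        simp only [Set.mem_insert_iff, Set.mem_singleton_iff, not_or]
        exact ⟨fun h => hCxA (h ▸ huC), huo⟩
      obtain ⟨f, hfK, hfu⟩ := this
      rcases hstep f hfK with ⟨hint, -⟩ | hD
      · exact ⟨f, ⟨hfK, hint⟩, hfu⟩
      · exact absurd (hD u hfu) (fun h => hCD.ne_of_mem huC h rfl)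
  have hoC : o ∈ C := by
    rcases hoCD with h | h
    · exact h
    · -- o ∈ Dd: parity contradiction
      exfalso
      have heq : ((A ∩ C) \ {v}) \ {o} = (A ∩ C) \ {v} := by
        apply Set.diff_singleton_eq_self
        rintro ⟨⟨-, hoC⟩, -⟩
        exact hCD.ne_of_mem hoC h rfl
      have hEv : Even (((A ∩ C) \ {v}).ncard) := by
        rw [← heq, ← hK'Ccov]
        exact even_ncard_covered (matching_mono Set.inter_subset_left
          (matching_mono Set.diff_subset hKm))
      exact parity_contra (show v ∈ A ∩ C from ⟨hvA, hvC⟩) hEvenAC hEv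
  refine ⟨(K' ∩ intE G C) ∪ {g}, ?_, ?_, ?_, ?_⟩
  · refine matching_union (matching_mono Set.inter_subset_left
      (matching_mono Set.diff_subset hKm)) (matching_singleton g) ?_
    rw [hK'Ccov, covered_singleton, hgset]
    rw [Set.disjoint_right]
    rintro u (rfl | rfl)
    · rintro ⟨⟨⟨-, hc⟩, -⟩, -⟩
      exact hCxA hc
    · rintro ⟨-, ho⟩
      exact ho rfl
  · intro f hf
    rcases hf with ⟨hfK, -⟩ | hfg
    · exact hKmono f (Set.diff_subset hfK)
    · rw [Set.mem_singleton_iff] at hfg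
      rw [hfg]
      exact hKmono g hgK
  · intro f hf
    rcases hf with ⟨hfK, hfint⟩ | hfg
    · exact ⟨Or.inl hfint.1, Or.inl hfint.2⟩
    · rw [Set.mem_singleton_iff] at hfg
      rw [hfg]
      constructor
      · have : G.fst g ∈ ({xA, o} : Set V) := by
          rw [← hgset]; exact Or.inl rfl
        rcases this with h | h
        · exact Or.inr h
        · exact Or.inl (h ▸ hoC)
      · have : G.snd g ∈ ({xA, o} : Set V) := by
          rw [← hgset]; exact Or.inr rfl
        rcases this with h | h
        · exact Or.inr h
        · exact Or.inl (h ▸ hoC)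
  · rw [covered_union, hK'Ccov, covered_singleton, hgset]
    ext u
    simp only [Set.mem_union, Set.mem_diff, Set.mem_inter_iff, Set.mem_insert_iff,
      Set.mem_singleton_iff]
    constructor
    · rintro (⟨⟨⟨h1, h2⟩, h3⟩, -⟩ | rfl | rfl)
      · exact Or.inl ⟨⟨h1, h2⟩, h3⟩
      · exact Or.inr rfl
      · exact Or.inl ⟨⟨hoA, hoC⟩, honv⟩
    · rintro (⟨⟨h1, h2⟩, h3⟩ | rfl)
      · by_cases ho : u = o
        · exact Or.inr (Or.inr ho)
        · exact Or.inl ⟨⟨⟨h1, h2⟩, h3⟩, ho⟩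
      · exact Or.inr (Or.inl rfl)

end Split

end Stmt18aux
open Stmt18aux in
/-- W-blocks are W-state graphs.  Let `(G,c)` be a W-state graph
whose monochromatic subgraph has the two factor-critical components `X, X'`,
let `{x,x'}` with `x ∈ X`, `x' ∈ X'` be a 2-vertex cut, and let `C` be a
connected component of `G - {x,x'}`.  Let `(H,cH)` be obtained from the
induced subgraph `G[C ∪ {x,x'}]` (real edges, described by `ρ eh = some e`,
with endpoints and colours inherited along the vertex injection `φ`) by adding
virtual bichromatic edges between `x` and `x'` (described by `ρ eh = none`)
so that both `x` and `x'` have incident red half-edges in `H` and at least one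
bichromatic edge of `H` joins them.  Then `(H,cH)` is a W-state graph. -/
theorem stmt18 {V E VH EH : Type}
    [Fintype V] [Fintype E] [Fintype VH] [Fintype EH]
    (G : Multigraph V E) (c : E → V → Bool) (h : G.IsWState c)
    (X X' : Set V) (hd : Disjoint X X') (hu : X ∪ X' = Set.univ)
    (hX : G.IsCompOn (G.MonoEdges c) Set.univ X)
    (hX' : G.IsCompOn (G.MonoEdges c) Set.univ X')
    (x x' : V) (hx : x ∈ X) (hx' : x' ∈ X')
    (hcut : ¬ G.ConnectedOn Set.univ (Set.univ \ {x, x'}))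
    (C : Set V) (hC : G.IsCompOn Set.univ (Set.univ \ {x, x'}) C)
    (H : Multigraph VH EH) (cH : EH → VH → Bool)
    (φ : VH → V) (hφ : Function.Injective φ)
    (hrange : Set.range φ = C ∪ {x, x'})
    (vx vx' : VH) (hvx : φ vx = x) (hvx' : φ vx' = x')
    (ρ : EH → Option E)
    -- real edges of H correspond to the edges of G induced on C ∪ {x,x'}:
    (hreal_end : ∀ eh e, ρ eh = some e →
        φ (H.fst eh) = G.fst e ∧ φ (H.snd eh) = G.snd e)
    (hreal_col : ∀ eh e, ρ eh = some e →
        ∀ w : VH, H.Inc eh w → cH eh w = c e (φ w))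
    (hreal_inj : ∀ eh eh' e, ρ eh = some e → ρ eh' = some e → eh = eh')
    (hreal_surj : ∀ e : E, G.fst e ∈ C ∪ {x, x'} → G.snd e ∈ C ∪ {x, x'} →
        ∃ eh, ρ eh = some e)
    -- virtual edges are bichromatic edges between x and x':
    (hvirt : ∀ eh, ρ eh = none →
        ((H.fst eh = vx ∧ H.snd eh = vx') ∨ (H.fst eh = vx' ∧ H.snd eh = vx)) ∧
        H.Bichromatic cH eh)
    -- the vertex condition holds at x and x' in H:
    (hredx : ∃ eh, H.Inc eh vx ∧ cH eh vx = true)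
    (hredx' : ∃ eh, H.Inc eh vx' ∧ cH eh vx' = true)
    -- at least one bichromatic edge of H joins x and x':
    (hjoin : ∃ eh, H.Bichromatic cH eh ∧
        ((H.fst eh = vx ∧ H.snd eh = vx') ∨ (H.fst eh = vx' ∧ H.snd eh = vx))) :
    H.IsWState cH := by
  classical
  obtain ⟨hmc, hmcond, hvc, hnrm⟩ := h
  -- Every vertex has an incident bichromatic edge.
  have hbic : ∀ v, ∃ e, G.Inc e v ∧ G.Bichromatic c e := by
    intro v
    obtain ⟨e, hev, hred⟩ := hvc v
    refine ⟨e, hev, ?_⟩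
    by_contra hb
    have hf : c e (G.fst e) = false := hnrm e hb
    have hs : c e (G.snd e) = false := by
      rw [Multigraph.Bichromatic, not_ne_iff] at hb
      rw [← hb]; exact hf
    rcases hev with hh | hh
    · rw [hh] at hf; rw [hf] at hred; exact Bool.false_ne_true hred
    · rw [hh] at hs; rw [hs] at hred; exact Bool.false_ne_true hred
  -- mono edges stay in the same mono component
  have hmonostep : ∀ e, ¬ G.Bichromatic c e → ∀ (A : Set V), G.IsCompOn (G.MonoEdges c) Set.univ A →
      (G.fst e ∈ A ↔ G.snd e ∈ A) := by
    intro e he A hA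
    obtain ⟨vA, -, hAdef⟩ := hA
    have hstep : ∀ a b : V, G.Inc e a → G.Inc e b → a ≠ b →
        G.ReachOn (G.MonoEdges c) Set.univ a b :=
      fun a b ha hb hne => Relation.ReflTransGen.single ⟨trivial, trivial, hne, e, he, ha, hb⟩
    constructor
    · intro hf
      rw [hAdef] at hf ⊢
      exact ⟨trivial, Relation.ReflTransGen.trans
        (hstep _ _ (inc_snd e) (inc_fst e) (fun hh => G.no_loop e hh.symm)) hf.2⟩
    · intro hs
      rw [hAdef] at hs ⊢
      exact ⟨trivial, Relation.ReflTransGen.trans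
        (hstep _ _ (inc_fst e) (inc_snd e) (G.no_loop e)) hs.2⟩
  have hsideX : SideOk G c X := fun e he => hmonostep e he X hX
  have hsideX' : SideOk G c X' := fun e he => hmonostep e he X' hX'
  have hxx' : x ≠ x' := fun hh => (Set.disjoint_left.1 hd) hx (hh ▸ hx')
  have hX'c : ∀ v, v ∈ X' ↔ v ∉ X :=
    fun v => ⟨fun hv hvX => (Set.disjoint_left.1 hd) hvX hv,
      fun hv => (hu ▸ (Set.mem_univ v) : v ∈ X ∪ X').resolve_left hv⟩
  have hXcne : Xᶜ.Nonempty := ⟨x', (hX'c x').1 hx'⟩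
  have hX'cne : X'ᶜ.Nonempty := ⟨x, fun hh => (Set.disjoint_left.1 hd) hx hh⟩
  have hfcX := fc_side hmc hmcond hsideX hbic hXcne
  have hfcX' := fc_side hmc hmcond hsideX' hbic hX'cne
  have hnbiX := no_bi_internal hmc hmcond hsideX hbic hXcne
  have hnbiX' := no_bi_internal hmc hmcond hsideX' hbic hX'cne
  -- every bichromatic edge crosses
  have hcross : ∀ e, G.Bichromatic c e →
      (G.fst e ∈ X ∧ G.snd e ∈ X') ∨ (G.fst e ∈ X' ∧ G.snd e ∈ X) := by
    intro e he
    by_cases hf : G.fst e ∈ X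
    · left
      refine ⟨hf, (hX'c _).2 fun hs => ?_⟩
      exact hnbiX e he ⟨hf, hs⟩
    · right
      have hf' : G.fst e ∈ X' := (hX'c _).2 hf
      refine ⟨hf', ?_⟩
      by_contra hs
      have hs' : G.snd e ∈ X' := (hX'c _).2 hs
      exact hnbiX' e he ⟨hf', hs'⟩
  -- component facts
  set S : Set V := Set.univ \ {x, x'} with hS
  set Dd : Set V := S \ C with hDd
  obtain ⟨v₀, hv₀S, hCdef⟩ := hC
  have hCS : C ⊆ S := fun u hu' => (hCdef ▸ hu' : _ ∧ _).1
  have hSmem : ∀ v, v ∈ S ↔ (v ≠ x ∧ v ≠ x') := by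
    intro v
    rw [hS]
    simp only [Set.mem_diff, Set.mem_univ, true_and, Set.mem_insert_iff,
      Set.mem_singleton_iff, not_or]
  have hCx : x ∉ C := fun hh => ((hSmem x).1 (hCS hh)).1 rfl
  have hCx' : x' ∉ C := fun hh => ((hSmem x').1 (hCS hh)).2 rfl
  have hDx : x ∉ Dd := fun hh => ((hSmem x).1 hh.1).1 rfl
  have hDx' : x' ∉ Dd := fun hh => ((hSmem x').1 hh.1).2 rfl
  have hCD : Disjoint C Dd := by
    rw [Set.disjoint_left]
    exact fun u huC huD => huD.2 huC
  have hpart : ∀ v, v ≠ x → v ≠ x' → v ∈ C ∨ v ∈ Dd := by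
    intro v h1 h2
    have hvS : v ∈ S := (hSmem v).2 ⟨h1, h2⟩
    by_cases hvC : v ∈ C
    · exact Or.inl hvC
    · exact Or.inr ⟨hvS, hvC⟩
  have hClo : ∀ e v w, v ∈ C → G.Inc e v → G.Inc e w → w ∈ C ∨ w = x ∨ w = x' := by
    intro e v w hvC hv hw
    by_cases h1 : w = x
    · exact Or.inr (Or.inl h1)
    by_cases h2 : w = x'
    · exact Or.inr (Or.inr h2)
    have hwS : w ∈ S := (hSmem w).2 ⟨h1, h2⟩
    by_cases hwv : w = v
    · exact Or.inl (hwv ▸ hvC)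
    left
    have hvC' := hCdef ▸ hvC
    rw [hCdef]
    refine ⟨hwS, Relation.ReflTransGen.head ⟨hwS, hCS hvC, hwv, e, trivial, hw, hv⟩ hvC'.2⟩
  have hDlo : ∀ e v w, v ∈ Dd → G.Inc e v → G.Inc e w → w ∈ Dd ∨ w = x ∨ w = x' := by
    intro e v w hvD hv hw
    by_cases h1 : w = x
    · exact Or.inr (Or.inl h1)
    by_cases h2 : w = x'
    · exact Or.inr (Or.inr h2)
    have hwS : w ∈ S := (hSmem w).2 ⟨h1, h2⟩
    left
    refine ⟨hwS, fun hwC => hvD.2 ?_⟩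
    rcases hClo e w v hwC hw hv with h | h | h
    · exact h
    · exact absurd (((hSmem v).1 hvD.1).1) (fun hh => hh h)
    · exact absurd (((hSmem v).1 hvD.1).2) (fun hh => hh h)
  -- D is nonempty
  have hDne : Dd.Nonempty := by
    by_contra hne
    rw [Set.not_nonempty_iff_eq_empty] at hne
    apply hcut
    have hSC : ∀ v ∈ S, v ∈ C := by
      intro v hv
      by_contra hvC
      exact absurd (show v ∈ Dd from ⟨hv, hvC⟩) (hne ▸ (Set.notMem_empty v))
    intro u hu' v hv'
    have hsym : Symmetric (fun a b => a ∈ S ∧ b ∈ S ∧ G.AdjIn Set.univ a b) := by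
      rintro a b ⟨ha, hb, hne', e, he, hae, hbe⟩
      exact ⟨hb, ha, Ne.symm hne', e, he, hbe, hae⟩
    have h1 : G.ReachOn Set.univ S u v₀ := (hCdef ▸ hSC u hu' : _ ∧ _).2
    have h2 : G.ReachOn Set.univ S v v₀ := (hCdef ▸ hSC v hv' : _ ∧ _).2
    exact h1.trans ((@Relation.ReflTransGen.stdSymm _ _ ⟨fun a b hab => hsym hab⟩).symm _ _ h2)
  -- the eight split matchings
  have hXD := fun v => hDlo v
  have hmuXC := split_muC (G := G) (c := c) (xB := x') hfcX hx ((hX'c x').1 hx') hCx hCD hpart hClo hDlo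
  have hmuXD := split_muC (G := G) (c := c) (xB := x') hfcX hx ((hX'c x').1 hx') hDx hCD.symm
    (fun v h1 h2 => (hpart v h1 h2).symm) hDlo hClo
  have hmuX'C := split_muC (G := G) (c := c) (xB := x) hfcX' hx' (fun hh => (Set.disjoint_left.1 hd) hx hh) hCx' hCD
    (fun v h1 h2 => hpart v h2 h1)
    (fun e v w hv h1 h2 => ((hClo e v w hv h1 h2).imp id Or.symm))
    (fun e v w hv h1 h2 => ((hDlo e v w hv h1 h2).imp id Or.symm))
  have hmuX'D := split_muC (G := G) (c := c) (xB := x) hfcX' hx' (fun hh => (Set.disjoint_left.1 hd) hx hh) hDx' hCD.symm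
    (fun v h1 h2 => (hpart v h2 h1).symm)
    (fun e v w hv h1 h2 => ((hDlo e v w hv h1 h2).imp id Or.symm))
    (fun e v w hv h1 h2 => ((hClo e v w hv h1 h2).imp id Or.symm))
  have hPDX := split_PC (G := G) (c := c) (xB := x') hfcX hx ((hX'c x').1 hx') hDx hCx hCD.symm
    (fun v h1 h2 => (hpart v h1 h2).symm) hDlo hClo
  have hPDX' := split_PC (G := G) (c := c) (xB := x) hfcX' hx' (fun hh => (Set.disjoint_left.1 hd) hx hh) hDx' hCx' hCD.symm
    (fun v h1 h2 => (hpart v h2 h1).symm)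
    (fun e v w hv h1 h2 => ((hDlo e v w hv h1 h2).imp id Or.symm))
    (fun e v w hv h1 h2 => ((hClo e v w hv h1 h2).imp id Or.symm))
  obtain ⟨NXC, hNXCm, hNXCmono, hNXCint, hNXCcov⟩ := hmuXC
  obtain ⟨NXD, hNXDm, hNXDmono, hNXDint, hNXDcov⟩ := hmuXD
  obtain ⟨NX'C, hNX'Cm, hNX'Cmono, hNX'Cint, hNX'Ccov⟩ := hmuX'C
  obtain ⟨NX'D, hNX'Dm, hNX'Dmono, hNX'Dint, hNX'Dcov⟩ := hmuX'D
  have hXor : ∀ u, u ∈ X ∨ u ∈ X' := by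
    intro u
    have : u ∈ X ∪ X' := by rw [hu]; trivial
    exact this
  have hCeq : C = (X ∩ C) ∪ (X' ∩ C) := by
    ext u
    constructor
    · intro hu'
      rcases hXor u with h | h
      · exact Or.inl ⟨h, hu'⟩
      · exact Or.inr ⟨h, hu'⟩
    · rintro (⟨-, h⟩ | ⟨-, h⟩) <;> exact h
  have hDeq : Dd = (X ∩ Dd) ∪ (X' ∩ Dd) := by
    ext u
    constructor
    · intro hu'
      rcases hXor u with h | h
      · exact Or.inl ⟨h, hu'⟩
      · exact Or.inr ⟨h, hu'⟩
    · rintro (⟨-, h⟩ | ⟨-, h⟩) <;> exact h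
  have hdisjCC : Disjoint (X ∩ C) (X' ∩ C) :=
    Set.disjoint_of_subset Set.inter_subset_left Set.inter_subset_left hd
  have hdisjDD : Disjoint (X ∩ Dd) (X' ∩ Dd) :=
    Set.disjoint_of_subset Set.inter_subset_left Set.inter_subset_left hd
  have hEvenC : Even C.ncard := by
    rw [hCeq, Set.ncard_union_eq hdisjCC]
    obtain ⟨k1, hk1⟩ : Even (X ∩ C).ncard := hNXCcov ▸ even_ncard_covered hNXCm
    obtain ⟨k2, hk2⟩ : Even (X' ∩ C).ncard := hNX'Ccov ▸ even_ncard_covered hNX'Cm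
    exact ⟨k1 + k2, by omega⟩
  -- cover of C and of D by mono matchings
  have hcoverC : ∃ N, G.IsMatching N ∧ Mono G c N ∧ covered G N = C := by
    refine ⟨NXC ∪ NX'C, matching_union hNXCm hNX'Cm ?_, ?_, ?_⟩
    · rw [hNXCcov, hNX'Ccov]; exact hdisjCC
    · rintro f (hf | hf)
      · exact hNXCmono f hf
      · exact hNX'Cmono f hf
    · rw [covered_union, hNXCcov, hNX'Ccov, ← hCeq]
  have hcoverD : ∃ N, G.IsMatching N ∧ Mono G c N ∧ covered G N = Dd := by
    refine ⟨NXD ∪ NX'D, matching_union hNXDm hNX'Dm ?_, ?_, ?_⟩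
    · rw [hNXDcov, hNX'Dcov]; exact hdisjDD
    · rintro f (hf | hf)
      · exact hNXDmono f hf
      · exact hNX'Dmono f hf
    · rw [covered_union, hNXDcov, hNX'Dcov, ← hDeq]
  -- a matching covering exactly D ∪ {x,x'}, containing a bichromatic edge
  have hTbuild : ∀ (A B : Set V) (xa xb : V), xa ∈ A → xb ∈ B → Disjoint A B →
      xa ∉ Dd → xb ∉ Dd →
      (∀ v ∈ A, v ∈ Dd → ∃ N : Set E, G.IsMatching N ∧ Mono G c N ∧
        (∀ f ∈ N, f ∈ intE G (Dd ∪ {xa})) ∧ covered G N = ((A ∩ Dd) \ {v}) ∪ {xa}) →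
      (∀ v ∈ B, v ∈ Dd → ∃ N : Set E, G.IsMatching N ∧ Mono G c N ∧
        (∀ f ∈ N, f ∈ intE G (Dd ∪ {xb})) ∧ covered G N = ((B ∩ Dd) \ {v}) ∪ {xb}) →
      (∃ N : Set E, G.IsMatching N ∧ Mono G c N ∧ (∀ f ∈ N, f ∈ intE G Dd) ∧
        covered G N = B ∩ Dd) →
      (∀ u, u ∈ A ∨ u ∈ B) →
      ∀ (dd oo : V) (g : E), G.Bichromatic c g → ({G.fst g, G.snd g} : Set V) = {dd, oo} →
        dd ∈ A → dd ∈ Dd → oo ∈ B → (oo ∈ Dd ∨ oo = xb) →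
        ∃ T, G.IsMatching T ∧ covered G T = Dd ∪ {xa, xb} ∧
          ∃ b ∈ T, G.Bichromatic c b := by
    intro A B xa xb hxa hxb hAB hxaD hxbD hPA hPB hNB hABu dd oo g hgb hgset hddA hddD hooB hooPos
    obtain ⟨N1, hN1m, hN1mono, hN1int, hN1cov⟩ := hPA dd hddA hddD
    have hcov1sub : covered G N1 ⊆ A := by
      rw [hN1cov]
      rintro u (⟨⟨h, -⟩, -⟩ | rfl)
      · exact h
      · exact hxa
    have hddn1 : dd ∉ covered G N1 := by
      rw [hN1cov]
      rintro (⟨-, hne⟩ | rfl)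
      · exact hne rfl
      · exact hxaD hddD
    have hoon1 : oo ∉ covered G N1 := fun hh =>
      (Set.disjoint_left.1 hAB) (hcov1sub hh) hooB
    have hgcov : covered G {g} = {dd, oo} := by rw [covered_singleton, hgset]
    rcases hooPos with hooD | rfl
    · obtain ⟨N2, hN2m, hN2mono, hN2int, hN2cov⟩ := hPB oo hooB hooD
      have hcov2sub : covered G N2 ⊆ B := by
        rw [hN2cov]
        rintro u (⟨⟨h, -⟩, -⟩ | rfl)
        · exact h
        · exact hxb
      have hddn2 : dd ∉ covered G N2 := fun hh =>
        (Set.disjoint_left.1 hAB) hddA (hcov2sub hh)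
      have hoon2 : oo ∉ covered G N2 := by
        rw [hN2cov]
        rintro (⟨-, hne⟩ | rfl)
        · exact hne rfl
        · exact hxbD hooD
      refine ⟨N1 ∪ N2 ∪ {g}, ?_, ?_, ⟨g, Or.inr rfl, hgb⟩⟩
      · refine matching_union (matching_union hN1m hN2m ?_) (matching_singleton g) ?_
        · exact Set.disjoint_of_subset hcov1sub hcov2sub hAB
        · rw [covered_union, hgcov, Set.disjoint_right]
          rintro u (rfl | rfl)
          · rintro (hh | hh)
            · exact hddn1 hh
            · exact hddn2 hh
          · rintro (hh | hh)
            · exact hoon1 hh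
            · exact hoon2 hh
      · rw [covered_union, covered_union, hN1cov, hN2cov, hgcov]
        ext u
        have hf1 : u = dd → u ∈ Dd := fun h => h ▸ hddD
        have hf2 : u = oo → u ∈ Dd := fun h => h ▸ hooD
        have hf3 : u ∈ A ∨ u ∈ B := hABu u
        simp only [Set.mem_union, Set.mem_diff, Set.mem_inter_iff, Set.mem_singleton_iff,
          Set.mem_insert_iff]
        constructor
        · rintro (((⟨⟨-, hh⟩, -⟩ | rfl) | (⟨⟨-, hh⟩, -⟩ | rfl)) | hh | hh)
          · exact Or.inl hh
          · exact Or.inr (Or.inl rfl)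
          · exact Or.inl hh
          · exact Or.inr (Or.inr rfl)
          · exact Or.inl (hf1 hh)
          · exact Or.inl (hf2 hh)
        · rintro (hDd' | rfl | rfl)
          · rcases hf3 with hA | hB
            · by_cases hud : u = dd
              · exact Or.inr (Or.inl hud)
              · exact Or.inl (Or.inl (Or.inl ⟨⟨hA, hDd'⟩, hud⟩))
            · by_cases huo : u = oo
              · exact Or.inr (Or.inr huo)
              · exact Or.inl (Or.inr (Or.inl ⟨⟨hB, hDd'⟩, huo⟩))
          · exact Or.inl (Or.inl (Or.inr rfl))
          · exact Or.inl (Or.inr (Or.inr rfl))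
    · obtain ⟨N2, hN2m, hN2mono, hN2int, hN2cov⟩ := hNB
      have hcov2sub : covered G N2 ⊆ B := by
        rw [hN2cov]
        rintro u ⟨h, -⟩
        exact h
      have hddn2 : dd ∉ covered G N2 := fun hh =>
        (Set.disjoint_left.1 hAB) hddA (hcov2sub hh)
      have hoon2 : oo ∉ covered G N2 := by
        rw [hN2cov]
        rintro ⟨-, hh⟩
        exact hxbD hh
      refine ⟨N1 ∪ N2 ∪ {g}, ?_, ?_, ⟨g, Or.inr rfl, hgb⟩⟩
      · refine matching_union (matching_union hN1m hN2m ?_) (matching_singleton g) ?_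
        · exact Set.disjoint_of_subset hcov1sub hcov2sub hAB
        · rw [covered_union, hgcov, Set.disjoint_right]
          rintro u (rfl | rfl)
          · rintro (hh | hh)
            · exact hddn1 hh
            · exact hddn2 hh
          · rintro (hh | hh)
            · exact hoon1 hh
            · exact hoon2 hh
      · rw [covered_union, covered_union, hN1cov, hN2cov, hgcov]
        ext u
        have hf1 : u = dd → u ∈ Dd := fun h => h ▸ hddD
        have hf3 : u ∈ A ∨ u ∈ B := hABu u
        simp only [Set.mem_union, Set.mem_diff, Set.mem_inter_iff, Set.mem_singleton_iff,
          Set.mem_insert_iff]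
        constructor
        · rintro (((⟨⟨-, hh⟩, -⟩ | rfl) | ⟨-, hh⟩) | hh | rfl)
          · exact Or.inl hh
          · exact Or.inr (Or.inl rfl)
          · exact Or.inl hh
          · exact Or.inl (hf1 hh)
          · exact Or.inr (Or.inr rfl)
        · rintro (hDd' | rfl | rfl)
          · rcases hf3 with hA | hB
            · by_cases hud : u = dd
              · exact Or.inr (Or.inl hud)
              · exact Or.inl (Or.inl (Or.inl ⟨⟨hA, hDd'⟩, hud⟩))
            · exact Or.inl (Or.inr ⟨hB, hDd'⟩)
          · exact Or.inl (Or.inl (Or.inr rfl))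
          · exact Or.inr (Or.inr rfl)
  have hT : ∃ T, G.IsMatching T ∧ covered G T = Dd ∪ {x, x'} ∧
      ∃ b ∈ T, G.Bichromatic c b := by
    obtain ⟨d, hdD⟩ := hDne
    obtain ⟨g, hgd, hgb⟩ := hbic d
    obtain ⟨o, hgo, hond, hgdends, hgset⟩ := other_end' hgd
    have hoPos : o ∈ Dd ∨ o = x ∨ o = x' := hDlo g d o hdD hgd hgo
    have hoside : ∀ {A B : Set V}, Disjoint A B → d ∈ A →
        ((G.fst g ∈ A ∧ G.snd g ∈ B) ∨ (G.fst g ∈ B ∧ G.snd g ∈ A)) → o ∈ B := by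
      intro A B hAB hdA hcr
      have hfstmem : G.fst g ∈ ({d, o} : Set V) := by rw [← hgset]; exact Or.inl rfl
      have hsndmem : G.snd g ∈ ({d, o} : Set V) := by rw [← hgset]; exact Or.inr rfl
      rcases hcr with ⟨h1, h2⟩ | ⟨h1, h2⟩
      · rcases hsndmem with hh | hh
        · exact absurd hdA (fun hha => (Set.disjoint_left.1 hAB) hha (hh ▸ h2))
        · exact hh ▸ h2
      · rcases hfstmem with hh | hh
        · exact absurd hdA (fun hha => (Set.disjoint_left.1 hAB) hha (hh ▸ h1))
        · exact hh ▸ h1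
    by_cases hdX : d ∈ X
    · have hoX' : o ∈ X' := hoside hd hdX (hcross g hgb)
      have honx : o ≠ x := fun hh => (Set.disjoint_left.1 hd) hx (hh ▸ hoX')
      have hoPos' : o ∈ Dd ∨ o = x' := by
        rcases hoPos with hh | hh | hh
        · exact Or.inl hh
        · exact absurd hh honx
        · exact Or.inr hh
      exact hTbuild X X' x x' hx hx' hd hDx hDx' hPDX hPDX' ⟨NX'D, hNX'Dm, hNX'Dmono, hNX'Dint, hNX'Dcov⟩ hXor d o g hgb hgset
        hdX hdD hoX' hoPos'
    · have hdX' : d ∈ X' := (hX'c d).2 hdX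
      have hoX : o ∈ X := hoside hd.symm hdX' ((hcross g hgb).symm)
      have honx' : o ≠ x' := fun hh => (Set.disjoint_left.1 hd) hoX (hh ▸ hx')
      have hoPos' : o ∈ Dd ∨ o = x := by
        rcases hoPos with hh | hh | hh
        · exact Or.inl hh
        · exact Or.inr hh
        · exact absurd hh honx'
      obtain ⟨T, hTm, hTcov, hTb⟩ := hTbuild X' X x' x hx' hx hd.symm hDx' hDx hPDX' hPDX
        ⟨NXD, hNXDm, hNXDmono, hNXDint, hNXDcov⟩ (fun u => (hXor u).symm) d o g hgb hgset hdX' hdD hoX hoPos'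
      exact ⟨T, hTm, by rw [hTcov, Set.pair_comm x' x], hTb⟩
  -- H-side machinery
  have hWmem : ∀ w : VH, φ w ∈ C ∪ {x, x'} := by
    intro w
    have : φ w ∈ Set.range φ := Set.mem_range_self w
    rwa [hrange] at this
  have hIncT : ∀ {eh : EH} {e : E} {w : VH}, ρ eh = some e →
      (H.Inc eh w ↔ G.Inc e (φ w)) := by
    intro eh e w hρ
    obtain ⟨h1, h2⟩ := hreal_end eh e hρ
    constructor
    · rintro (rfl | rfl)
      · exact Or.inl h1.symm
      · exact Or.inr h2.symm
    · rintro (hh | hh)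
      · exact Or.inl (hφ (h1.trans hh))
      · exact Or.inr (hφ (h2.trans hh))
  have hbicT : ∀ (eh : EH) (e : E), ρ eh = some e →
      (H.Bichromatic cH eh ↔ G.Bichromatic c e) := by
    intro eh e hρ
    obtain ⟨h1, h2⟩ := hreal_end eh e hρ
    have c1 : cH eh (H.fst eh) = c e (G.fst e) := by
      rw [hreal_col eh e hρ (H.fst eh) (Or.inl rfl), h1]
    have c2 : cH eh (H.snd eh) = c e (G.snd e) := by
      rw [hreal_col eh e hρ (H.snd eh) (Or.inr rfl), h2]
    rw [Multigraph.Bichromatic, Multigraph.Bichromatic, c1, c2]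
  set pull : Set E → Set EH := fun N => {eh | ∃ e ∈ N, ρ eh = some e} with hpull
  set img : Set EH → Set E := fun P => {e | ∃ eh ∈ P, ρ eh = some e} with himg
  have hest_wcases : ∀ (est : EH),
      ((H.fst est = vx ∧ H.snd est = vx') ∨ (H.fst est = vx' ∧ H.snd est = vx)) →
      (H.Inc est vx ∧ H.Inc est vx') ∧ ∀ w, H.Inc est w → w = vx ∨ w = vx' := by
    intro est hest
    rcases hest with ⟨h1, h2⟩ | ⟨h1, h2⟩
    · refine ⟨⟨Or.inl h1, Or.inr h2⟩, ?_⟩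
      rintro w (rfl | rfl)
      · exact Or.inl h1
      · exact Or.inr h2
    · refine ⟨⟨Or.inr h2, Or.inl h1⟩, ?_⟩
      rintro w (rfl | rfl)
      · exact Or.inr h1
      · exact Or.inl h2
  have hbuild1 : ∀ N : Set E, G.IsMatching N → covered G N = C ∪ {x, x'} →
      H.IsPerfectMatching (pull N) := by
    intro N hNm hNcov
    refine ⟨fun _ _ => ⟨trivial, trivial⟩, fun w _ => ?_⟩
    have hφw : φ w ∈ covered G N := by rw [hNcov]; exact hWmem w
    obtain ⟨e, heN, hev⟩ := hφw
    obtain ⟨eh, hρ⟩ := hreal_surj e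
      (hNcov ▸ mem_covered heN (inc_fst e)) (hNcov ▸ mem_covered heN (inc_snd e))
    refine ⟨eh, ⟨⟨e, heN, hρ⟩, (hIncT hρ).2 hev⟩, ?_⟩
    rintro f ⟨⟨e', he'N, hρ'⟩, hfw⟩
    have hie : G.Inc e' (φ w) := (hIncT hρ').1 hfw
    have he'e : e' = e := matching_unique_at hNm he'N heN hie hev
    exact hreal_inj f eh e (he'e ▸ hρ') hρ
  have hbuild2 : ∀ N : Set E, G.IsMatching N → covered G N = C → ∀ est : EH,
      ((H.fst est = vx ∧ H.snd est = vx') ∨ (H.fst est = vx' ∧ H.snd est = vx)) →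
      H.IsPerfectMatching (pull N ∪ {est}) := by
    intro N hNm hNcov est hest
    obtain ⟨⟨hei, hei'⟩, hwcase⟩ := hest_wcases est hest
    refine ⟨fun _ _ => ⟨trivial, trivial⟩, fun w _ => ?_⟩
    rcases hWmem w with hwC | hwx | hwx'
    · -- φ w ∈ C
      have hφw : φ w ∈ covered G N := by rw [hNcov]; exact hwC
      obtain ⟨e, heN, hev⟩ := hφw
      obtain ⟨eh, hρ⟩ := hreal_surj e
        (Or.inl (hNcov ▸ mem_covered heN (inc_fst e)))
        (Or.inl (hNcov ▸ mem_covered heN (inc_snd e)))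
      refine ⟨eh, ⟨Or.inl ⟨e, heN, hρ⟩, (hIncT hρ).2 hev⟩, ?_⟩
      rintro f ⟨(⟨e', he'N, hρ'⟩ | hf), hfw⟩
      · have hie : G.Inc e' (φ w) := (hIncT hρ').1 hfw
        have he'e : e' = e := matching_unique_at hNm he'N heN hie hev
        exact hreal_inj f eh e (he'e ▸ hρ') hρ
      · exfalso
        rw [Set.mem_singleton_iff] at hf
        subst hf
        rcases hwcase w hfw with rfl | rfl
        · rw [hvx] at hwC; exact hCx hwC
        · rw [hvx'] at hwC; exact hCx' hwC
    · -- φ w = x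
      have hwvx : w = vx := hφ (by rw [hwx, hvx])
      subst hwvx
      refine ⟨est, ⟨Or.inr rfl, hei⟩, ?_⟩
      rintro f ⟨(⟨e', he'N, hρ'⟩ | hf), hfw⟩
      · exfalso
        have hie : G.Inc e' (φ w) := (hIncT hρ').1 hfw
        have : φ w ∈ covered G N := mem_covered he'N hie
        rw [hNcov, hwx] at this
        exact hCx this
      · exact hf
    · -- φ w = x'
      have hwvx' : w = vx' := hφ (by rw [hwx', hvx'])
      subst hwvx'
      refine ⟨est, ⟨Or.inr rfl, hei'⟩, ?_⟩
      rintro f ⟨(⟨e', he'N, hρ'⟩ | hf), hfw⟩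
      · exfalso
        have hie : G.Inc e' (φ w) := (hIncT hρ').1 hfw
        have : φ w ∈ covered G N := mem_covered he'N hie
        rw [hNcov, hwx'] at this
        exact hCx' this
      · exact hf
  have hTpar : ∀ cv : Set V, C ⊆ cv → cv ⊆ C ∪ {x, x'} → Even cv.ncard →
      cv = C ∨ cv = C ∪ {x, x'} := by
    intro cv hsub1 hsub2 hev
    by_cases hxin : x ∈ cv <;> by_cases hx'in : x' ∈ cv
    · right
      apply Set.Subset.antisymm hsub2
      rintro u (hh | rfl | rfl)
      · exact hsub1 hh
      · exact hxin
      · exact hx'in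
    · exfalso
      have : cv = insert x C := by
        apply Set.Subset.antisymm
        · intro u hu'
          rcases hsub2 hu' with hh | hh | hh
          · exact Set.mem_insert_of_mem x hh
          · rw [hh]; exact Set.mem_insert x C
          · exact absurd (hh ▸ hu') hx'in
        · rintro u (rfl | hh)
          · exact hxin
          · exact hsub1 hh
      rw [this, Set.ncard_insert_of_notMem hCx] at hev
      obtain ⟨k1, hk1⟩ := hev
      obtain ⟨k2, hk2⟩ := hEvenC
      omega
    · exfalso
      have : cv = insert x' C := by
        apply Set.Subset.antisymm
        · intro u hu'
          rcases hsub2 hu' with hh | hh | hh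
          · exact Set.mem_insert_of_mem x' hh
          · exact absurd (hh ▸ hu') hxin
          · rw [hh]; exact Set.mem_insert x' C
        · rintro u (rfl | hh)
          · exact hx'in
          · exact hsub1 hh
      rw [this, Set.ncard_insert_of_notMem hCx'] at hev
      obtain ⟨k1, hk1⟩ := hev
      obtain ⟨k2, hk2⟩ := hEvenC
      omega
    · left
      apply Set.Subset.antisymm ?_ hsub1
      intro u hu'
      rcases hsub2 hu' with hh | hh | hh
      · exact hh
      · exact absurd (hh ▸ hu') hxin
      · exact absurd (hh ▸ hu') hx'in
  obtain ⟨NC, hNCm, hNCmono, hNCcov⟩ := hcoverC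
  obtain ⟨ND, hNDm, hNDmono, hNDcov⟩ := hcoverD
  obtain ⟨T, hTm, hTcov, bT, hbTT, hbTb⟩ := hT
  obtain ⟨est, hestb, hestpat⟩ := hjoin
  have hdisjCDxx : Disjoint C (Dd ∪ {x, x'}) := by
    rw [Set.disjoint_left]
    rintro u huC (hh | hh | hh)
    · exact (Set.disjoint_left.1 hCD) huC hh
    · exact hCx (hh ▸ huC)
    · exact hCx' (hh ▸ huC)
  have hunivCD : C ∪ (Dd ∪ {x, x'}) = Set.univ := by
    apply Set.eq_univ_of_forall
    intro u
    by_cases h1 : u = x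
    · exact Or.inr (Or.inr (Or.inl h1))
    by_cases h2 : u = x'
    · exact Or.inr (Or.inr (Or.inr h2))
    rcases hpart u h1 h2 with hh | hh
    · exact Or.inl hh
    · exact Or.inr (Or.inl hh)
  have hdisjWD : Disjoint (C ∪ {x, x'}) Dd := by
    rw [Set.disjoint_left]
    rintro u (huC | hh | hh) huD
    · exact (Set.disjoint_left.1 hCD) huC huD
    · exact hDx (hh ▸ huD)
    · exact hDx' (hh ▸ huD)
  have hunivWD : (C ∪ {x, x'}) ∪ Dd = Set.univ := by
    apply Set.eq_univ_of_forall
    intro u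
    by_cases h1 : u = x
    · exact Or.inl (Or.inr (Or.inl h1))
    by_cases h2 : u = x'
    · exact Or.inl (Or.inr (Or.inr h2))
    rcases hpart u h1 h2 with hh | hh
    · exact Or.inl (Or.inl hh)
    · exact Or.inr hh
  -- the induced-edge interiority of edges at a vertex of C
  have hintW : ∀ (u : V), u ∈ C → ∀ e, G.Inc e u → e ∈ intE G (C ∪ {x, x'}) := by
    intro u huC e hev
    obtain ⟨o, hgo, -, -, hoset⟩ := other_end' hev
    have hoW : o ∈ C ∪ {x, x'} := by
      rcases hClo e u o huC hev hgo with hh | hh | hh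
      · exact Or.inl hh
      · exact Or.inr (Or.inl hh)
      · exact Or.inr (Or.inr hh)
    constructor
    · have hmem : G.fst e ∈ ({u, o} : Set V) := by rw [← hoset]; exact Or.inl rfl
      rcases hmem with hh | hh
      · rw [hh]; exact Or.inl huC
      · rw [hh]; exact hoW
    · have hmem : G.snd e ∈ ({u, o} : Set V) := by rw [← hoset]; exact Or.inr rfl
      rcases hmem with hh | hh
      · rw [hh]; exact Or.inl huC
      · rw [hh]; exact hoW
  refine ⟨?_, ?_, ?_, ?_⟩
  · -- MatchingCovered
    intro eh
    by_cases hpat : (H.fst eh = vx ∧ H.snd eh = vx') ∨ (H.fst eh = vx' ∧ H.snd eh = vx)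
    · exact ⟨pull NC ∪ {eh}, hbuild2 NC hNCm hNCcov eh hpat, Or.inr rfl⟩
    · obtain ⟨f, hρf⟩ : ∃ f, ρ eh = some f := by
        cases hρ : ρ eh with
        | none => exact absurd (hvirt eh hρ).1 hpat
        | some f => exact ⟨f, rfl⟩
      obtain ⟨M₀, hPM₀, hfM₀⟩ := hmc f
      obtain ⟨hM₀m, hM₀c⟩ := pm_iff.1 hPM₀
      set N₁ := M₀ ∩ intE G (C ∪ {x, x'}) with hN₁
      have hfN₁ : f ∈ N₁ := by
        refine ⟨hfM₀, ?_, ?_⟩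
        · rw [← (hreal_end eh f hρf).1]; exact hWmem _
        · rw [← (hreal_end eh f hρf).2]; exact hWmem _
      have hN₁m : G.IsMatching N₁ := matching_mono Set.inter_subset_left hM₀m
      have hCsubcov : C ⊆ covered G N₁ := by
        intro u huC
        have : u ∈ covered G M₀ := hM₀c ▸ trivial
        obtain ⟨e, heM, hev⟩ := this
        exact ⟨e, ⟨heM, hintW u huC e hev⟩, hev⟩
      rcases hTpar _ hCsubcov covered_int_subset (even_ncard_covered hN₁m) with hcv | hcv
      · exact ⟨pull N₁ ∪ {est}, hbuild2 N₁ hN₁m hcv est hestpat, Or.inl ⟨f, hfN₁, hρf⟩⟩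
      · exact ⟨pull N₁, hbuild1 N₁ hN₁m hcv, ⟨f, hfN₁, hρf⟩⟩
  · -- MatchingCond
    intro P hP
    have hPm : H.IsMatching P := (pm_iff.1 hP).1
    set N := img P with hNdef
    have hNm : G.IsMatching N := by
      rintro e ⟨eh, hehP, hρe⟩ f ⟨fh, hfhP, hρf⟩ hef v ⟨hev, hfv⟩
      obtain ⟨w, hw⟩ : ∃ w, φ w = v := by
        rcases hev with hh | hh
        · exact ⟨H.fst eh, (hreal_end eh e hρe).1.trans hh⟩
        · exact ⟨H.snd eh, (hreal_end eh e hρe).2.trans hh⟩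
      have hi1 : H.Inc eh w := (hIncT hρe).2 (hw.symm ▸ hev)
      have hi2 : H.Inc fh w := (hIncT hρf).2 (hw.symm ▸ hfv)
      have hne : eh ≠ fh := by
        rintro rfl
        rw [hρe] at hρf
        exact hef (Option.some.inj hρf)
      exact hPm eh hehP fh hfhP hne w ⟨hi1, hi2⟩
    have hNsubW : covered G N ⊆ C ∪ {x, x'} := by
      rintro v ⟨e, ⟨eh, hehP, hρe⟩, hev⟩
      rcases hev with hh | hh
      · rw [← hh, ← (hreal_end eh e hρe).1]; exact hWmem _
      · rw [← hh, ← (hreal_end eh e hρe).2]; exact hWmem _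
    have hCsubN : C ⊆ covered G N := by
      intro u huC
      obtain ⟨w, hw⟩ : ∃ w, φ w = u := by
        have : u ∈ Set.range φ := by rw [hrange]; exact Or.inl huC
        exact this
      obtain ⟨ehw, ⟨hehP, hinc⟩, -⟩ := hP.2 w trivial
      cases hρ : ρ ehw with
      | some e => exact ⟨e, ⟨ehw, hehP, hρ⟩, hw ▸ (hIncT hρ).1 hinc⟩
      | none =>
        exfalso
        obtain ⟨hpat, -⟩ := hvirt ehw hρ
        rcases (hest_wcases ehw hpat).2 w hinc with rfl | rfl
        · rw [hvx] at hw; exact hCx (hw ▸ huC)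
        · rw [hvx'] at hw; exact hCx' (hw ▸ huC)
    rcases hTpar _ hCsubN hNsubW (even_ncard_covered hNm) with hcv | hcv
    · -- covered N = C : the unique bichromatic edge of P is virtual
      obtain ⟨g, ⟨hgP, hgvx⟩, hguniq⟩ := hP.2 vx trivial
      have hρg : ρ g = none := by
        cases hρ : ρ g with
        | some e =>
          exfalso
          have hie : G.Inc e x := by rw [← hvx]; exact (hIncT hρ).1 hgvx
          have : x ∈ covered G N := ⟨e, ⟨g, hgP, hρ⟩, hie⟩
          rw [hcv] at this
          exact hCx this
        | none => rfl
      obtain ⟨hgpat, hgbich⟩ := hvirt g hρg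
      have hMpm : G.IsPerfectMatching (N ∪ T) := by
        refine pm_iff.2 ⟨matching_union hNm hTm ?_, ?_⟩
        · rw [hcv, hTcov]; exact hdisjCDxx
        · rw [covered_union, hcv, hTcov]; exact hunivCD
      obtain ⟨b, ⟨hbM, hbbich⟩, hbuniq⟩ := hmcond _ hMpm
      have hbTeq : bT = b := hbuniq bT ⟨Or.inr hbTT, hbTb⟩
      have hbT' : b ∈ T := hbTeq ▸ hbTT
      have hNmono : ∀ e ∈ N, ¬ G.Bichromatic c e := by
        intro e heN hbe
        have heb : e = b := hbuniq e ⟨Or.inl heN, hbe⟩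
        have h1 : G.fst b ∈ covered G N := mem_covered (heb ▸ heN) (inc_fst b)
        have h2 : G.fst b ∈ covered G T := mem_covered hbT' (inc_fst b)
        rw [hcv] at h1
        rw [hTcov] at h2
        exact (Set.disjoint_left.1 hdisjCDxx) h1 h2
      refine ⟨g, ⟨hgP, hgbich⟩, ?_⟩
      rintro p ⟨hpP, hpbich⟩
      cases hρ : ρ p with
      | some ep => exact absurd ((hbicT p ep hρ).1 hpbich) (hNmono ep ⟨p, hpP, hρ⟩)
      | none =>
        obtain ⟨hppat, -⟩ := hvirt p hρ
        exact hguniq p ⟨hpP, (hest_wcases p hppat).1.1⟩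
    · -- covered N = C ∪ {x,x'} : the unique bichromatic edge of P is real
      have hxcov : x ∈ covered G N := by rw [hcv]; exact Or.inr (Or.inl rfl)
      obtain ⟨e0, he0N, he0x⟩ := hxcov
      obtain ⟨ehx, hehxP, hρx⟩ := he0N
      have hincvx : H.Inc ehx vx := (hIncT hρx).2 (by rw [hvx]; exact he0x)
      have hnovirt : ∀ q ∈ P, ρ q ≠ none := by
        intro q hqP hρq
        obtain ⟨hqpat, -⟩ := hvirt q hρq
        have hiq : H.Inc q vx := (hest_wcases q hqpat).1.1
        have hq := matching_unique_at hPm hqP hehxP hiq hincvx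
        rw [hq, hρx] at hρq
        exact Option.some_ne_none e0 hρq
      have hMpm : G.IsPerfectMatching (N ∪ ND) := by
        refine pm_iff.2 ⟨matching_union hNm hNDm ?_, ?_⟩
        · rw [hcv, hNDcov]; exact hdisjWD
        · rw [covered_union, hcv, hNDcov]; exact hunivWD
      obtain ⟨b, ⟨hbM, hbbich⟩, hbuniq⟩ := hmcond _ hMpm
      have hbN : b ∈ N := by
        rcases hbM with hh | hh
        · exact hh
        · exact absurd hbbich (hNDmono b hh)
      obtain ⟨bh, hbhP, hρb⟩ := hbN
      refine ⟨bh, ⟨hbhP, (hbicT bh b hρb).2 hbbich⟩, ?_⟩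
      rintro p ⟨hpP, hpbich⟩
      cases hρ : ρ p with
      | none => exact absurd hρ (hnovirt p hpP)
      | some ep =>
        have hepb : ep = b := hbuniq ep ⟨Or.inl ⟨p, hpP, hρ⟩, (hbicT p ep hρ).1 hpbich⟩
        exact hreal_inj p bh b (hepb ▸ hρ) hρb
  · -- VertexCond
    intro w
    by_cases hw1 : w = vx
    · subst hw1; exact hredx
    by_cases hw2 : w = vx'
    · subst hw2; exact hredx'
    have hwC : φ w ∈ C := by
      rcases hWmem w with hh | hh | hh
      · exact hh
      · exact absurd (hφ (by rw [hh, hvx])) hw1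
      · exact absurd (hφ (by rw [hh, hvx'])) hw2
    obtain ⟨e, hev, hred⟩ := hvc (φ w)
    have heint := hintW (φ w) hwC e hev
    obtain ⟨eh, hρ⟩ := hreal_surj e heint.1 heint.2
    refine ⟨eh, (hIncT hρ).2 hev, ?_⟩
    rw [hreal_col eh e hρ w ((hIncT hρ).2 hev)]
    exact hred
  · -- NoRedMono
    intro eh hnb
    cases hρ : ρ eh with
    | none => exact absurd (hvirt eh hρ).2 hnb
    | some e =>
      have hmo : ¬ G.Bichromatic c e := fun hb => hnb ((hbicT eh e hρ).2 hb)
      have hf := hnrm e hmo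
      rw [hreal_col eh e hρ (H.fst eh) (Or.inl rfl), (hreal_end eh e hρ).1]
      exact hf
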